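/- A monoid endomorphism f of P_fin0(ℕ) is an automorphism if and only if it is injective and f({0,1}) = {0,1}. -/

import Mathlib

open Pointwise

/-- The reduced power monoid `P_fin0(ℕ)`: finite subsets of ℕ containing 0,
under setwise (pointwise) addition. -/
def P0 : AddSubmonoid (Finset ℕ) where
  carrier := {X : Finset ℕ | (0 : ℕ) ∈ X}
  add_mem' := fun hx hy => by simpa using Finset.add_mem_add hx hy
  zero_mem' := by simp [Finset.mem_zero]

/-- Maximum of a set in `P0`. -/
def mx (X : P0) : ℕ := X.1.max' ⟨0, X.2⟩

theorem mem_P0 {X : Finset ℕ} : X ∈ P0 ↔ (0 : ℕ) ∈ X := Iff.rfl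

/-- intervals as elements of P0 -/
def Ivl (n : ℕ) : P0 := ⟨Finset.range (n+1), Finset.mem_range.2 (Nat.succ_pos n)⟩

lemma range_add_range (a b : ℕ) :
    Finset.range (a+1) + Finset.range (b+1) = Finset.range (a+b+1) := by
  ext x
  simp only [Finset.mem_add, Finset.mem_range]
  constructor
  · rintro ⟨c, hc, d, hd, rfl⟩; omega
  · intro hx; exact ⟨min x a, by omega, x - min x a, by omega, by omega⟩

lemma Ivl_succ (n : ℕ) : Ivl (n+1) = Ivl n + Ivl 1 := by
  apply Subtype.ext
  show Finset.range (n+2) = Finset.range (n+1) + Finset.range 2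
  rw [range_add_range n 1]

lemma Ivl_zero : Ivl 0 = 0 := by
  apply Subtype.ext
  show Finset.range 1 = (0 : Finset ℕ)
  decide

/-- absorption: A + [0,n] = [0,2n] when max A = n -/
lemma interval_absorb {A : Finset ℕ} (h0 : 0 ∈ A) {n : ℕ} (hn : ∀ a ∈ A, a ≤ n)
    (hmem : n ∈ A) : A + Finset.range (n+1) = Finset.range (2*n+1) := by
  ext x
  simp only [Finset.mem_add, Finset.mem_range]
  constructor
  · rintro ⟨a, ha, b, hb, rfl⟩; have := hn a ha; omega
  · intro hx
    by_cases h : x ≤ n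
    · exact ⟨0, h0, x, by omega, by omega⟩
    · exact ⟨n, hmem, x - n, by omega, by omega⟩

lemma P0_absorb (X : P0) : X + Ivl (mx X) = Ivl (2 * mx X) := by
  apply Subtype.ext
  exact interval_absorb X.2 (fun a ha => Finset.le_max' _ a ha) (Finset.max'_mem _ _)

/-- erase a nonzero element of B from B + B: still a solution of B + Z = 3B -/
lemma erase_one_sol {B : Finset ℕ} (h0 : 0 ∈ B) (h1 : 1 ∈ B) :
    B + (B + B).erase 1 = B + (B + B) := by
  apply Finset.Subset.antisymm
  · exact Finset.add_subset_add_left (Finset.erase_subset _ _)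
  · intro s hs
    rw [Finset.mem_add] at hs
    obtain ⟨a, ha, d, hd, rfl⟩ := hs
    rw [Finset.mem_add]
    by_cases hd1 : d = 1
    · subst hd1
      by_cases ha1 : a = 1
      · subst ha1
        refine ⟨0, h0, 2, Finset.mem_erase.2 ⟨by omega, ?_⟩, by omega⟩
        exact Finset.mem_add.2 ⟨1, h1, 1, h1, rfl⟩
      · refine ⟨1, h1, a, Finset.mem_erase.2 ⟨ha1, ?_⟩, by omega⟩
        exact Finset.mem_add.2 ⟨a, ha, 0, h0, by omega⟩
    · exact ⟨a, ha, d, Finset.mem_erase.2 ⟨hd1, hd⟩, rfl⟩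

lemma erase_m_sol {B : Finset ℕ} (h0 : 0 ∈ B) (h1 : 1 ∈ B) {m : ℕ} (hm : m ∈ B)
    (hm2 : 2 ≤ m) : B + (B + B).erase (m+1) = B + (B + B) := by
  apply Finset.Subset.antisymm
  · exact Finset.add_subset_add_left (Finset.erase_subset _ _)
  · intro s hs
    rw [Finset.mem_add] at hs
    obtain ⟨a, ha, d, hd, rfl⟩ := hs
    rw [Finset.mem_add]
    by_cases hdm : d = m + 1
    · subst hdm
      by_cases ha1 : a = 1
      · subst ha1
        refine ⟨m, hm, 2, Finset.mem_erase.2 ⟨by omega, ?_⟩, by omega⟩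
        exact Finset.mem_add.2 ⟨1, h1, 1, h1, rfl⟩
      · refine ⟨1, h1, a + m, Finset.mem_erase.2 ⟨by omega, ?_⟩, by omega⟩
        exact Finset.mem_add.2 ⟨a, ha, m, hm, rfl⟩
    · exact ⟨a, ha, d, Finset.mem_erase.2 ⟨hdm, hd⟩, rfl⟩

/-- the only solutions of {0,1} + Z = {0,1,2,3} with 0 ∈ Z -/
lemma sol_char {Z : Finset ℕ} (h0 : 0 ∈ Z) (h : ({0,1} : Finset ℕ) + Z = {0,1,2,3}) :
    Z = {0, 2} ∨ Z = {0, 1, 2} := by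
  have hsub : ∀ z ∈ Z, z ≤ 3 := by
    intro z hz
    have : z ∈ ({0,1,2,3} : Finset ℕ) := by
      rw [← h]; exact Finset.mem_add.2 ⟨0, by decide, z, hz, by omega⟩
    simp only [Finset.mem_insert, Finset.mem_singleton] at this; omega
  have h3 : 3 ∉ Z := by
    intro h3
    have : (4 : ℕ) ∈ ({0,1,2,3} : Finset ℕ) := by
      rw [← h]; exact Finset.mem_add.2 ⟨1, by decide, 3, h3, rfl⟩
    simp at this
  have h2 : 2 ∈ Z := by
    have : (3 : ℕ) ∈ ({0,1,2,3} : Finset ℕ) := by decide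
    rw [← h] at this
    obtain ⟨a, ha, z, hz, hv⟩ := Finset.mem_add.1 this
    simp only [Finset.mem_insert, Finset.mem_singleton] at ha
    rcases ha with rfl | rfl
    · exfalso; have hz3 : z = 3 := by omega
      exact h3 (hz3 ▸ hz)
    · have : z = 2 := by omega
      exact this ▸ hz
  by_cases h1 : 1 ∈ Z
  · right; ext x
    simp only [Finset.mem_insert, Finset.mem_singleton]
    constructor
    · intro hx
      have := hsub x hx
      have hne3 : x ≠ 3 := fun e => h3 (e ▸ hx)
      omega
    · rintro (rfl | rfl | rfl) <;> assumption
  · left; ext x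
    simp only [Finset.mem_insert, Finset.mem_singleton]
    constructor
    · intro hx
      have := hsub x hx
      have hne3 : x ≠ 3 := fun e => h3 (e ▸ hx)
      have hne1 : x ≠ 1 := fun e => h1 (e ▸ hx)
      omega
    · rintro (rfl | rfl) <;> assumption

/-- an endomorphism of P_fin0(ℕ) is an automorphism iff it is
injective and sends `{0,1}` to `{0,1}`. -/
theorem stmt9 (f : P0 →+ P0) :
    Function.Bijective f ↔
      (Function.Injective f ∧
        f ⟨({0, 1} : Finset ℕ), by simp [mem_P0]⟩ = ⟨({0, 1} : Finset ℕ), by simp [mem_P0]⟩) := by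
  set u : P0 := ⟨({0, 1} : Finset ℕ), by simp [mem_P0]⟩ with hu
  have hu1 : u = Ivl 1 := by apply Subtype.ext; show ({0,1} : Finset ℕ) = Finset.range 2; decide
  constructor
  · -- forward: bijective → fixes {0,1}
    intro hbij
    refine ⟨hbij.1, ?_⟩
    obtain ⟨V, hV⟩ := hbij.2 u
    -- 1 ∈ f u
    have key : ∀ n, (1 : ℕ) ∈ (f (Ivl n)).1 → (1 : ℕ) ∈ (f u).1 := by
      intro n
      induction n with
      | zero =>
        intro hmem
        rw [Ivl_zero, map_zero] at hmem
        exact absurd (Finset.mem_zero.1 hmem) (by omega)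
      | succ n ih =>
        intro hmem
        rw [Ivl_succ, map_add, ← hu1] at hmem
        obtain ⟨a, ha, b, hb, hab⟩ := Finset.mem_add.1 hmem
        have : a = 1 ∨ b = 1 := by omega
        rcases this with rfl | rfl
        · exact ih ha
        · exact hb
    have h1U : (1 : ℕ) ∈ (f u).1 := by
      apply key (2 * mx V)
      have habs : f V + f (Ivl (mx V)) = f (Ivl (2 * mx V)) := by
        rw [← map_add, P0_absorb]
      rw [hV] at habs
      rw [← habs]
      exact Finset.mem_add.2 ⟨1, by simp [hu], 0, (f (Ivl (mx V))).2, rfl⟩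
    by_cases hfix : f u = u
    · exact hfix
    exfalso
    -- get an element ≥ 2 in f u
    have h0U : (0 : ℕ) ∈ (f u).1 := (f u).2
    have hex : ∃ m ∈ (f u).1, 2 ≤ m := by
      by_contra hc
      push_neg at hc
      apply hfix
      apply Subtype.ext
      ext x
      show x ∈ (f u).1 ↔ x ∈ ({0,1} : Finset ℕ)
      simp only [Finset.mem_insert, Finset.mem_singleton]
      constructor
      · intro hx; have := hc x hx; omega
      · rintro (rfl | rfl) <;> assumption
    obtain ⟨m, hm, hm2⟩ := hex
    set B : Finset ℕ := (f u).1 with hB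
    set U : P0 := f u with hUdef
    -- three solutions of U + Z = U + (U + U)
    have h1BB : (1 : ℕ) ∈ B + B := Finset.mem_add.2 ⟨1, h1U, 0, h0U, rfl⟩
    have hmBB : m + 1 ∈ B + B := Finset.mem_add.2 ⟨m, hm, 1, h1U, rfl⟩
    have h0BB : (0 : ℕ) ∈ B + B := Finset.mem_add.2 ⟨0, h0U, 0, h0U, rfl⟩
    set Z0 : P0 := U + U with hZ0
    set Z1 : P0 := ⟨(B + B).erase 1, Finset.mem_erase.2 ⟨by omega, h0BB⟩⟩ with hZ1
    set Z2 : P0 := ⟨(B + B).erase (m+1), Finset.mem_erase.2 ⟨by omega, h0BB⟩⟩ with hZ2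
    have hsol0 : U + Z0 = U + (U + U) := rfl
    have hsol1 : U + Z1 = U + (U + U) := Subtype.ext (erase_one_sol h0U h1U)
    have hsol2 : U + Z2 = U + (U + U) := Subtype.ext (erase_m_sol h0U h1U hm hm2)
    have hZ01 : Z0 ≠ Z1 := by
      intro e
      have : (1 : ℕ) ∈ Z1.1 := e ▸ h1BB
      exact (Finset.notMem_erase 1 _) this
    have hZ02 : Z0 ≠ Z2 := by
      intro e
      have : m + 1 ∈ Z2.1 := e ▸ hmBB
      exact (Finset.notMem_erase (m+1) _) this
    have hZ12 : Z1 ≠ Z2 := by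
      intro e
      have h1' : m + 1 ∈ Z1.1 := Finset.mem_erase.2 ⟨by omega, hmBB⟩
      have : m + 1 ∈ Z2.1 := e ▸ h1'
      exact (Finset.notMem_erase (m+1) _) this
    -- pull back
    obtain ⟨Y0, hY0⟩ := hbij.2 Z0
    obtain ⟨Y1, hY1⟩ := hbij.2 Z1
    obtain ⟨Y2, hY2⟩ := hbij.2 Z2
    have huuu : ({0,1} : Finset ℕ) + (({0,1} : Finset ℕ) + ({0,1} : Finset ℕ)) = {0,1,2,3} := by
      decide
    have pull : ∀ (Y : P0) (Z : P0), f Y = Z → U + Z = U + (U + U) →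
        Y.1 = {0, 2} ∨ Y.1 = {0, 1, 2} := by
      intro Y Z hYZ hsol
      have : f (u + Y) = f (u + (u + u)) := by
        rw [map_add, map_add, map_add, hYZ, ← hUdef, hsol]
      have heq : u + Y = u + (u + u) := hbij.1 this
      have heqF : ({0,1} : Finset ℕ) + Y.1 = {0,1,2,3} := by
        rw [← huuu]
        exact congrArg Subtype.val heq
      exact sol_char Y.2 heqF
    have c0 := pull Y0 Z0 hY0 hsol0
    have c1 := pull Y1 Z1 hY1 hsol1
    have c2 := pull Y2 Z2 hY2 hsol2
    have hY01 : Y0 ≠ Y1 := fun e => hZ01 (by rw [← hY0, ← hY1, e])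
    have hY02 : Y0 ≠ Y2 := fun e => hZ02 (by rw [← hY0, ← hY2, e])
    have hY12 : Y1 ≠ Y2 := fun e => hZ12 (by rw [← hY1, ← hY2, e])
    rcases c0 with e0 | e0 <;> rcases c1 with e1 | e1 <;> rcases c2 with e2 | e2 <;>
      first
        | exact hY01 (Subtype.ext (e0.trans e1.symm))
        | exact hY02 (Subtype.ext (e0.trans e2.symm))
        | exact hY12 (Subtype.ext (e1.trans e2.symm))
  · -- backward: injective + fixes {0,1} → bijective
    rintro ⟨hinj, hfix⟩
    refine ⟨hinj, ?_⟩
    -- f fixes all intervals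
    have hIvl : ∀ n, f (Ivl n) = Ivl n := by
      intro n
      induction n with
      | zero => rw [Ivl_zero, map_zero]
      | succ n ih => rw [Ivl_succ, map_add, ih, ← hu1, hfix]
    intro Y
    set n : ℕ := mx Y with hn
    set T : Finset (Finset ℕ) :=
      (Finset.range (n+1)).powerset.filter
        (fun A => 0 ∈ A ∧ A + Finset.range (n+1) = Finset.range (2*n+1)) with hT
    have hmemT : ∀ {A : Finset ℕ}, A ∈ T ↔
        (A ⊆ Finset.range (n+1) ∧ 0 ∈ A ∧ A + Finset.range (n+1) = Finset.range (2*n+1)) := by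
      intro A
      rw [hT, Finset.mem_filter, Finset.mem_powerset]
    have hg : ∀ (A : Finset ℕ) (hA : A ∈ T),
        (f ⟨A, (hmemT.1 hA).2.1⟩).1 ∈ T := by
      intro A hA
      obtain ⟨hAsub, hA0, hAeq⟩ := hmemT.1 hA
      set X : P0 := ⟨A, hA0⟩ with hX
      have hXeq : X + Ivl n = Ivl (2*n) := by
        apply Subtype.ext
        show A + Finset.range (n+1) = Finset.range (2*n+1)
        exact hAeq
      have hfXeq : f X + Ivl n = Ivl (2*n) := by
        rw [← hIvl n, ← map_add, hXeq, hIvl]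
      have hfXF : (f X).1 + Finset.range (n+1) = Finset.range (2*n+1) :=
        congrArg Subtype.val hfXeq
      refine hmemT.2 ⟨?_, (f X).2, hfXF⟩
      intro a ha
      have : a + n ∈ Finset.range (2*n+1) := by
        rw [← hfXF]
        exact Finset.mem_add.2 ⟨a, ha, n, Finset.mem_range.2 (by omega), rfl⟩
      rw [Finset.mem_range] at this ⊢
      omega
    have hsurj := Finset.surj_on_of_inj_on_of_card_le
      (fun A hA => (f ⟨A, (hmemT.1 hA).2.1⟩).1) hg
      (fun a₁ a₂ ha₁ ha₂ he => by
        have : f ⟨a₁, (hmemT.1 ha₁).2.1⟩ = f ⟨a₂, (hmemT.1 ha₂).2.1⟩ := Subtype.ext he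
        exact congrArg Subtype.val (hinj this))
      le_rfl
    have hYT : Y.1 ∈ T := by
      refine hmemT.2 ⟨?_, Y.2, ?_⟩
      · intro y hy
        rw [Finset.mem_range, hn]
        exact Nat.lt_succ_of_le (Finset.le_max' _ y hy)
      · exact interval_absorb Y.2 (fun a ha => Finset.le_max' _ a ha) (Finset.max'_mem _ _)
    obtain ⟨A, hA, hYA⟩ := hsurj Y.1 hYT
    exact ⟨⟨A, (hmemT.1 hA).2.1⟩, (Subtype.ext hYA).symm⟩
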